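/- For every Sperner-admissible labeling ℓ : V_{k,q} → {1,…,k} (with k ≥ 2, q ≥ 1), the number of lattice points b ∈ V_{k,q-1} for which the cell e(b) is monochromatic under ℓ is at most |V_{k,q-2}| = C(q+k-3, k-1). -/

import Mathlib

/-- For every Sperner-admissible labeling `ℓ : V_{k,q} → {1,…,k}`
(with `k ≥ 2`, `q ≥ 1`), the number of lattice points `b ∈ V_{k,q-1}` whose cell
`e(b)` is monochromatic under `ℓ` is at most `|V_{k,q-2}| = C(q+k-3, k-1)`. -/
theorem sperner_lattice_monochromatic_upper_bound (k q : ℕ) (hk : 2 ≤ k) (hq : 1 ≤ q)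
    (ℓ : (Fin k → ℕ) → Fin k)
    (hℓ : ∀ a : Fin k → ℕ, (∑ i, a i) = q → 0 < a (ℓ a)) :
    ((Finset.Nat.antidiagonalTuple k (q - 1)).filter fun b =>
        ∃ c : Fin k, ∀ i : Fin k,
          ℓ (fun t => b t + if t = i then 1 else 0) = c).card ≤
      Nat.choose (q + k - 3) (k - 1) := by
  classical
  set i0 : Fin k := ⟨0, by omega⟩ with hi0
  set c₀ : (Fin k → ℕ) → Fin k := fun b => ℓ (fun t => b t + if t = i0 then 1 else 0) with hc₀
  set S := (Finset.Nat.antidiagonalTuple k (q - 1)).filter fun b =>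
      ∃ c : Fin k, ∀ i : Fin k,
        ℓ (fun t => b t + if t = i then 1 else 0) = c with hS
  have key : ∀ b ∈ S, (∑ i, b i) = q - 1 ∧
      (∀ i : Fin k, ℓ (fun t => b t + if t = i then 1 else 0) = c₀ b) ∧
      0 < b (c₀ b) := by
    intro b hb
    rw [hS, Finset.mem_filter, Finset.Nat.mem_antidiagonalTuple] at hb
    obtain ⟨hsum, c, hc⟩ := hb
    have hcc : c₀ b = c := hc i0
    refine ⟨hsum, fun i => by rw [hc i, hcc], ?_⟩
    obtain ⟨j, hj⟩ := Fintype.exists_ne_of_one_lt_card (by simpa using by omega : 1 < Fintype.card (Fin k)) c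
    have hsum' : (∑ i, (fun t => b t + if t = j then 1 else 0) i) = q := by
      simp only [Finset.sum_add_distrib, hsum]
      simp [Finset.sum_ite_eq']
      omega
    have hpos := hℓ _ hsum'
    rw [hc j] at hpos
    rw [hcc]
    simpa [Ne.symm hj] using hpos
  set F : (Fin k → ℕ) → (Fin k → ℕ) := fun b i => b i - if i = c₀ b then 1 else 0 with hF
  have hbF : ∀ b ∈ S, ∀ i, b i = F b i + if i = c₀ b then 1 else 0 := by
    intro b hb i
    obtain ⟨_, _, hpos⟩ := key b hb
    simp only [hF]
    by_cases h : i = c₀ b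
    · subst h; simp; omega
    · simp [h]
  have hFinj : ∀ b ∈ S, ∀ b' ∈ S, F b = F b' → b = b' := by
    intro b hb b' hb' hFeq
    obtain ⟨_, hc, _⟩ := key b hb
    obtain ⟨_, hc', _⟩ := key b' hb'
    by_cases hcc : c₀ b = c₀ b'
    · funext i; rw [hbF b hb i, hbF b' hb' i, hFeq, hcc]
    · exfalso
      have hab : (fun t => b t + if t = c₀ b' then 1 else 0)
          = (fun t => b' t + if t = c₀ b then 1 else 0) := by
        funext t
        rw [hbF b hb t, hbF b' hb' t, hFeq]
        by_cases h1 : t = c₀ b <;> by_cases h2 : t = c₀ b' <;> simp [h1, h2] <;> omega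
      have h1 : ℓ (fun t => b t + if t = c₀ b' then 1 else 0) = c₀ b := hc (c₀ b')
      have h2 : ℓ (fun t => b' t + if t = c₀ b then 1 else 0) = c₀ b' := hc' (c₀ b)
      rw [hab, h2] at h1
      exact hcc h1.symm
  by_cases hq2 : 2 ≤ q
  · -- the main case: inject into Sym (Fin k) (q - 2)
    have hFsum : ∀ b ∈ S, (∑ i, F b i) = q - 2 := by
      intro b hb
      obtain ⟨hsum, _, hpos⟩ := key b hb
      have h1 : (∑ i, (F b i + if i = c₀ b then 1 else 0)) = q - 1 := by
        rw [← hsum]; exact Finset.sum_congr rfl fun i _ => (hbF b hb i).symm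
      rw [Finset.sum_add_distrib] at h1
      simp [Finset.sum_ite_eq'] at h1
      omega
    -- multiset encoding
    have hGcount : ∀ f : Fin k → ℕ, ∀ j : Fin k,
        Multiset.count j (∑ i, (f i) • ({i} : Multiset (Fin k))) = f j := by
      intro f j
      rw [Multiset.count_sum']
      simp [Multiset.count_singleton, Finset.sum_ite_eq']
    have hGcard : ∀ f : Fin k → ℕ,
        Multiset.card (∑ i, (f i) • ({i} : Multiset (Fin k))) = ∑ i, f i := by
      intro f
      exact (map_sum (⟨⟨Multiset.card, Multiset.card_zero⟩, Multiset.card_add⟩ :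
          Multiset (Fin k) →+ ℕ) (fun i => f i • ({i} : Multiset (Fin k))) Finset.univ).trans
        (by simp [Multiset.card_nsmul])
    have hmap : ∀ b, b ∈ S → ∃ h : Multiset.card (∑ i, (F b i) • ({i} : Multiset (Fin k))) = q - 2, True := by
      intro b hb
      exact ⟨by rw [hGcard, hFsum b hb], trivial⟩
    have hcard : S.card ≤ Fintype.card (Sym (Fin k) (q - 2)) := by
      rw [← Finset.card_univ]
      refine Finset.card_le_card_of_injOn
        (fun b => if h : b ∈ S then
            (⟨∑ i, (F b i) • ({i} : Multiset (Fin k)), (hmap b h).1⟩ : Sym (Fin k) (q - 2))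
          else Sym.replicate (q - 2) i0)
        (fun _ _ => Finset.mem_univ _) ?_
      intro b hb b' hb' heq
      simp only [Finset.mem_coe] at hb hb'
      simp only [dif_pos hb, dif_pos hb'] at heq
      have hm : (∑ i, (F b i) • ({i} : Multiset (Fin k)))
          = ∑ i, (F b' i) • ({i} : Multiset (Fin k)) := by
          have := congrArg Subtype.val heq; erw [dif_pos hb, dif_pos hb'] at this; exact this
      have hFF : F b = F b' := by
        funext j
        rw [← hGcount (F b) j, ← hGcount (F b') j, hm]
      exact hFinj b hb b' hb' hFF
    have hsymcard : Fintype.card (Sym (Fin k) (q - 2)) = (q + k - 3).choose (k - 1) := by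
      rw [Sym.card_sym_eq_choose]
      rw [Fintype.card_fin]
      have h1 : k + (q - 2) - 1 = q + k - 3 := by omega
      have h2 : q - 2 = (q + k - 3) - (k - 1) := by omega
      rw [h1, h2, Nat.choose_symm (by omega)]
    rw [← hsymcard]
    exact hcard
  · -- q = 1: the set is empty
    have hq1 : q = 1 := by omega
    have hempty : S = ∅ := by
      apply Finset.eq_empty_of_forall_notMem
      intro b hb
      obtain ⟨hsum, _, hpos⟩ := key b hb
      have hle : b (c₀ b) ≤ ∑ i, b i :=
        Finset.single_le_sum (fun i _ => Nat.zero_le _) (Finset.mem_univ _)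
      omega
    rw [hempty]
    simp
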